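/- Let M > 0 and a > 0 be real numbers. Then lim_{r → +∞} (1 − 2M/r + r²/a²)^(1/2) · ∫_r^∞ s·(1 − 2M/s + s²/a²)^(−3/2) ds = a². -/

import Mathlib

open MeasureTheory Set Filter

/-- The limit `κ(r)^(1/2)·∫_r^∞ s·κ(s)^(-3/2) ds → a²` as `r → +∞`, where
`κ(s) = 1 - 2M/s + s²/a²` is the allowed-region function of the open (K = -1)
McVittie spacetime. -/
theorem mcvittie_integral_limit_atTop (M a : ℝ) (hM : 0 < M) (ha : 0 < a) :
    Filter.Tendsto
      (fun r : ℝ => (1 - 2 * M / r + r ^ 2 / a ^ 2) ^ ((1 : ℝ) / 2) *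
        ∫ s in Set.Ioi r, s * (1 - 2 * M / s + s ^ 2 / a ^ 2) ^ (-(3 : ℝ) / 2))
      Filter.atTop (nhds (a ^ 2)) := by
  set k : ℝ → ℝ := fun s => 1 - 2 * M / s + s ^ 2 / a ^ 2 with hk
  set R : ℝ := 2*M + a + a^2*M + 1 with hR
  have hR1 : (1:ℝ) ≤ R := by nlinarith [sq_nonneg a]
  have hR0 : (0:ℝ) < R := by linarith
  have hs_pos : ∀ s : ℝ, R ≤ s → 0 < s := fun s hs => lt_of_lt_of_le hR0 hs
  have hk_lb : ∀ s : ℝ, R ≤ s → s^2/a^2 ≤ k s := by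
    intro s hs
    have hs0 := hs_pos s hs
    have h2M : 2*M/s ≤ 1 := by
      rw [div_le_one hs0]; nlinarith [sq_nonneg a]
    simp only [hk]; linarith
  have hk_pos : ∀ s : ℝ, R ≤ s → 0 < k s := by
    intro s hs
    have hs0 := hs_pos s hs
    exact lt_of_lt_of_le (by positivity) (hk_lb s hs)
  -- upper bound on the rpow
  have hbound : ∀ s : ℝ, R ≤ s → k s ^ (-(3:ℝ)/2) ≤ a^3 / s^3 := by
    intro s hs
    have hs0 := hs_pos s hs
    have hsa : (0:ℝ) < s/a := div_pos hs0 ha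
    have h1 : k s ^ (-(3:ℝ)/2) ≤ (s^2/a^2 : ℝ) ^ (-(3:ℝ)/2) :=
      Real.rpow_le_rpow_of_nonpos (by positivity) (hk_lb s hs) (by norm_num)
    have h2 : (s^2/a^2 : ℝ) ^ (-(3:ℝ)/2) = a^3 / s^3 := by
      rw [← div_pow, ← Real.rpow_natCast (s/a) 2, ← Real.rpow_mul hsa.le]
      rw [show ((2:ℕ):ℝ) * (-(3:ℝ)/2) = -(3:ℝ) by norm_num]
      rw [Real.rpow_neg hsa.le, show (3:ℝ) = ((3:ℕ):ℝ) by norm_num, Real.rpow_natCast]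
      rw [div_pow, inv_div]
    rw [h2] at h1; exact h1
  -- derivative
  have hderiv : ∀ s : ℝ, R ≤ s → HasDerivAt (fun t => -(a^2 * k t ^ (-(1:ℝ)/2)))
      (s * k s ^ (-(3:ℝ)/2) + a^2*M/s^2 * k s ^ (-(3:ℝ)/2)) s := by
    intro s hs
    have hs0 := hs_pos s hs
    have hks := hk_pos s hs
    have hk' : HasDerivAt k (2*M/s^2 + 2*s/a^2) s := by
      have h1 : HasDerivAt (fun t:ℝ => 2*M/t) (-(2*M/s^2)) s := by
        simp only [div_eq_mul_inv]
        exact ((hasDerivAt_inv hs0.ne').const_mul (2*M)).congr_deriv (by ring)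
      have h2 : HasDerivAt (fun t:ℝ => t^2/a^2) (2*s/a^2) s := by
        simpa using (hasDerivAt_pow 2 s).div_const (a^2)
      have h3 := ((hasDerivAt_const s (1:ℝ)).sub h1).add h2
      simp only [hk]
      exact h3.congr_deriv (by ring)
    have h3 := hk'.rpow_const (p := -(1:ℝ)/2) (Or.inl hks.ne')
    have h4 := (h3.const_mul (a^2)).neg
    refine h4.congr_deriv ?_
    rw [show (-(1:ℝ)/2 - 1) = -(3:ℝ)/2 by norm_num]
    field_simp
    ring
  -- tendsto of the antiderivative
  have hk_top : Tendsto k atTop atTop := by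
    apply tendsto_atTop_mono' _ _ ((tendsto_pow_atTop (two_ne_zero)).atTop_div_const (by positivity : (0:ℝ) < a^2))
    filter_upwards [eventually_ge_atTop R] with s hs using hk_lb s hs
  have hF0 : Tendsto (fun r => -(a^2 * k r ^ (-(1:ℝ)/2))) atTop (nhds 0) := by
    have h1 : Tendsto (fun x:ℝ => x ^ (-(1:ℝ)/2)) atTop (nhds 0) := by
      have := tendsto_rpow_neg_atTop (y := (1:ℝ)/2) (by norm_num)
      simpa [neg_div] using this
    have h2 := ((h1.comp hk_top).const_mul (a^2)).neg
    simpa using h2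
  -- continuity / measurability on Ioi r
  have hcontOn : ∀ r : ℝ, R ≤ r → ContinuousOn (fun s => k s ^ (-(3:ℝ)/2)) (Ioi r) := by
    intro r hr
    have hkc : ContinuousOn k (Ioi r) := by
      apply ContinuousOn.add
      apply ContinuousOn.sub continuousOn_const
      · exact continuousOn_const.div continuousOn_id (fun x hx => (hs_pos x (hr.trans hx.out.le)).ne')
      · exact (continuousOn_pow 2).div_const _
    exact hkc.rpow_const (fun x hx => Or.inl (hk_pos x (hr.trans hx.out.le)).ne')
  -- integrability
  have hint1 : ∀ r : ℝ, R ≤ r → IntegrableOn (fun s => s * k s ^ (-(3:ℝ)/2)) (Ioi r) := by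
    intro r hr
    have hr0 := hs_pos r hr
    have hmaj : IntegrableOn (fun s : ℝ => a^3 * s ^ (-(2:ℝ))) (Ioi r) :=
      (integrableOn_Ioi_rpow_of_lt (by norm_num) hr0).const_mul _
    apply hmaj.integrable.mono
    · exact ((continuousOn_id.mul (hcontOn r hr)).aestronglyMeasurable measurableSet_Ioi)
    · rw [ae_restrict_iff' measurableSet_Ioi]
      apply ae_of_all
      intro s hs'
      have hsR : R ≤ s := hr.trans hs'.out.le
      have hs0 := hs_pos s hsR
      have hb := hbound s hsR
      have hknn : (0:ℝ) ≤ k s ^ (-(3:ℝ)/2) := Real.rpow_nonneg (hk_pos s hsR).le _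
      have heq : s ^ (-(2:ℝ)) = (s^2)⁻¹ := by
        rw [show (-(2:ℝ)) = -((2:ℕ):ℝ) by norm_num, Real.rpow_neg hs0.le, Real.rpow_natCast]
      rw [Real.norm_eq_abs, Real.norm_eq_abs, abs_of_nonneg (by positivity),
        abs_of_nonneg (by positivity : (0:ℝ) ≤ a^3 * s ^ (-(2:ℝ))), heq]
      calc s * k s ^ (-(3:ℝ)/2) ≤ s * (a^3/s^3) := by
            exact mul_le_mul_of_nonneg_left hb hs0.le
        _ = a^3 * (s^2)⁻¹ := by field_simp
  have hint2 : ∀ r : ℝ, R ≤ r → IntegrableOn (fun s => a^2*M/s^2 * k s ^ (-(3:ℝ)/2)) (Ioi r) := by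
    intro r hr
    have hr0 := hs_pos r hr
    have hmaj : IntegrableOn (fun s : ℝ => a^5*M * s ^ (-(5:ℝ))) (Ioi r) :=
      (integrableOn_Ioi_rpow_of_lt (by norm_num) hr0).const_mul _
    apply hmaj.integrable.mono
    · apply ContinuousOn.aestronglyMeasurable _ measurableSet_Ioi
      exact (continuousOn_const.div (continuousOn_pow 2)
        (fun x hx => pow_ne_zero _ (hs_pos x (hr.trans hx.out.le)).ne')).mul (hcontOn r hr)
    · rw [ae_restrict_iff' measurableSet_Ioi]
      apply ae_of_all
      intro s hs'
      have hsR : R ≤ s := hr.trans hs'.out.le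
      have hs0 := hs_pos s hsR
      have hb := hbound s hsR
      have hknn : (0:ℝ) ≤ k s ^ (-(3:ℝ)/2) := Real.rpow_nonneg (hk_pos s hsR).le _
      have heq : s ^ (-(5:ℝ)) = (s^5)⁻¹ := by
        rw [show (-(5:ℝ)) = -((5:ℕ):ℝ) by norm_num, Real.rpow_neg hs0.le, Real.rpow_natCast]
      rw [Real.norm_eq_abs, Real.norm_eq_abs, abs_of_nonneg (by positivity),
        abs_of_nonneg (by positivity : (0:ℝ) ≤ a^5*M * s ^ (-(5:ℝ))), heq]
      calc a^2*M/s^2 * k s ^ (-(3:ℝ)/2) ≤ a^2*M/s^2 * (a^3/s^3) :=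
            mul_le_mul_of_nonneg_left hb (by positivity)
        _ = a^5*M * (s^5)⁻¹ := by field_simp
  -- pointwise bound for g₂
  have hg2bound : ∀ r : ℝ, R ≤ r →
      (∫ s in Ioi r, a^2*M/s^2 * k s ^ (-(3:ℝ)/2)) ≤ a^5*M * (r ^ (-(4:ℝ)) / 4) := by
    intro r hr
    have hr0 := hs_pos r hr
    have hmaj : IntegrableOn (fun s : ℝ => a^5*M * s ^ (-(5:ℝ))) (Ioi r) :=
      (integrableOn_Ioi_rpow_of_lt (by norm_num) hr0).const_mul _
    have h1 : (∫ s in Ioi r, a^2*M/s^2 * k s ^ (-(3:ℝ)/2)) ≤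
        ∫ s in Ioi r, a^5*M * s ^ (-(5:ℝ)) := by
      apply setIntegral_mono_on (hint2 r hr) hmaj measurableSet_Ioi
      intro s hs'
      have hsR : R ≤ s := hr.trans hs'.out.le
      have hs0 := hs_pos s hsR
      have heq : s ^ (-(5:ℝ)) = (s^5)⁻¹ := by
        rw [show (-(5:ℝ)) = -((5:ℕ):ℝ) by norm_num, Real.rpow_neg hs0.le, Real.rpow_natCast]
      rw [heq]
      calc a^2*M/s^2 * k s ^ (-(3:ℝ)/2) ≤ a^2*M/s^2 * (a^3/s^3) :=
            mul_le_mul_of_nonneg_left (hbound s hsR) (by positivity)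
        _ = a^5*M * (s^5)⁻¹ := by field_simp
    have h2 : (∫ s in Ioi r, a^5*M * s ^ (-(5:ℝ))) = a^5*M * (r ^ (-(4:ℝ)) / 4) := by
      rw [MeasureTheory.integral_const_mul, integral_Ioi_rpow_of_lt (by norm_num) hr0]
      norm_num
    rw [h2] at h1; exact h1
  -- FTC identity
  have hFTC : ∀ r : ℝ, R ≤ r →
      (∫ s in Ioi r, s * k s ^ (-(3:ℝ)/2)) =
        a^2 * k r ^ (-(1:ℝ)/2) - ∫ s in Ioi r, a^2*M/s^2 * k s ^ (-(3:ℝ)/2) := by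
    intro r hr
    have key := integral_Ioi_of_hasDerivAt_of_tendsto'
      (f := fun t => -(a^2 * k t ^ (-(1:ℝ)/2)))
      (f' := fun s => s * k s ^ (-(3:ℝ)/2) + a^2*M/s^2 * k s ^ (-(3:ℝ)/2))
      (a := r) (m := 0)
      (fun x hx => hderiv x (hr.trans hx.out)) ((hint1 r hr).add (hint2 r hr)) hF0
    rw [integral_add (hint1 r hr) (hint2 r hr)] at key
    linarith [key]
  -- eventual equality of the target with a^2 - E r
  have hkey : ∀ r : ℝ, R ≤ r →
      k r ^ ((1:ℝ)/2) * (∫ s in Ioi r, s * k s ^ (-(3:ℝ)/2)) =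
        a^2 - k r ^ ((1:ℝ)/2) * ∫ s in Ioi r, a^2*M/s^2 * k s ^ (-(3:ℝ)/2) := by
    intro r hr
    rw [hFTC r hr, mul_sub, ← mul_assoc, mul_comm (k r ^ ((1:ℝ)/2)) (a^2), mul_assoc,
      ← Real.rpow_add (hk_pos r hr)]
    norm_num
  -- the error term tends to 0
  have hE : Tendsto (fun r => k r ^ ((1:ℝ)/2) * ∫ s in Ioi r, a^2*M/s^2 * k s ^ (-(3:ℝ)/2))
      atTop (nhds 0) := by
    apply tendsto_of_tendsto_of_tendsto_of_le_of_le' (g := fun _ => (0:ℝ))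
      (h := fun r => (a^4*M/2) * r ^ (-(3:ℝ))) tendsto_const_nhds
    · have := (tendsto_rpow_neg_atTop (y := (3:ℝ)) (by norm_num)).const_mul (a^4*M/2)
      simpa using this
    · filter_upwards [eventually_ge_atTop R] with r hr
      have hr0 := hs_pos r hr
      apply mul_nonneg (Real.rpow_nonneg (hk_pos r hr).le _)
      apply setIntegral_nonneg measurableSet_Ioi
      intro s hs'
      have hsR : R ≤ s := hr.trans hs'.out.le
      have hs0 := hs_pos s hsR
      exact mul_nonneg (by positivity) (Real.rpow_nonneg (hk_pos s hsR).le _)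
    · filter_upwards [eventually_ge_atTop R] with r hr
      have hr0 := hs_pos r hr
      have hra : a ≤ r := by rw [hR] at hr; nlinarith [sq_nonneg a]
      -- k r ≤ (2r/a)^2 and so k r ^ (1/2) ≤ 2r/a
      have hkub : k r ≤ (2*r/a)^2 := by
        have h1 : (1:ℝ) ≤ r^2/a^2 := by
          rw [le_div_iff₀ (by positivity)]; nlinarith
        have h2 : 0 ≤ 2*M/r := by positivity
        have : k r ≤ 1 + r^2/a^2 := by simp only [hk]; linarith
        calc k r ≤ 1 + r^2/a^2 := this
          _ ≤ 2 * (r^2/a^2) := by linarith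
          _ ≤ 4 * (r^2/a^2) := by nlinarith [h1]
          _ = (2*r/a)^2 := by field_simp; ring
      have hhalf : k r ^ ((1:ℝ)/2) ≤ 2*r/a := by
        have h1 : k r ^ ((1:ℝ)/2) ≤ ((2*r/a)^2) ^ ((1:ℝ)/2) :=
          Real.rpow_le_rpow (hk_pos r hr).le hkub (by norm_num)
        have h2 : ((2*r/a)^2 : ℝ) ^ ((1:ℝ)/2) = 2*r/a := by
          rw [← Real.rpow_natCast (2*r/a) 2, ← Real.rpow_mul (by positivity)]
          norm_num
        rw [h2] at h1; exact h1
      have hJnn : (0:ℝ) ≤ ∫ s in Ioi r, a^2*M/s^2 * k s ^ (-(3:ℝ)/2) := by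
        apply setIntegral_nonneg measurableSet_Ioi
        intro s hs'
        have hsR : R ≤ s := hr.trans hs'.out.le
        have hs0 := hs_pos s hsR
        exact mul_nonneg (by positivity) (Real.rpow_nonneg (hk_pos s hsR).le _)
      calc k r ^ ((1:ℝ)/2) * (∫ s in Ioi r, a^2*M/s^2 * k s ^ (-(3:ℝ)/2))
          ≤ (2*r/a) * (a^5*M * (r ^ (-(4:ℝ)) / 4)) := by
            apply mul_le_mul hhalf (hg2bound r hr) hJnn (by positivity)
        _ = (a^4*M/2) * r ^ (-(3:ℝ)) := by
            have hrr : r * r ^ (-(4:ℝ)) = r ^ (-(3:ℝ)) := by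
              nth_rewrite 1 [← Real.rpow_one r]
              rw [← Real.rpow_add hr0]
              norm_num
            rw [← hrr]
            field_simp
            ring
  have hfinal : Tendsto (fun r => a^2 - k r ^ ((1:ℝ)/2) *
      ∫ s in Ioi r, a^2*M/s^2 * k s ^ (-(3:ℝ)/2)) atTop (nhds (a^2)) := by
    simpa using (tendsto_const_nhds.sub hE)
  apply Filter.Tendsto.congr' _ hfinal
  filter_upwards [eventually_ge_atTop R] with r hr
  rw [← hkey r hr]
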